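/- (Real analyticity of the reparametrized Student-t mixture log-likelihood.) Fix d, K, n ≥ 1, ε > 0 and data points x_1,…,x_n ∈ ℝ^d. The function H(α, ν, μ, Σ) = −(1/n) Σ_{i=1}^n log( Σ_{k=1}^K φ1(α)_k · f( x_i | φ2(ν)_k, μ_k, φ3(Σ)_k ) ), with φ1(α)_k = exp(α_k)/Σ_{j=1}^K exp(α_j), φ2(ν)_k = ν_k² + ε and φ3(Σ)_k = Σ_kᵀΣ_k + εI, is real analytic on all of ℝ^K × ℝ^K × ℝ^{d×K} × Sym(d)^K. -/

import Mathlib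

open Filter Topology Matrix

attribute [local instance] Matrix.normedAddCommGroup Matrix.normedSpace

/-- The density of the `d`-dimensional Student-t distribution with `ν` degrees of
freedom, location `μ` and scatter matrix `Sig`, evaluated at `x`. -/
noncomputable def studentPdf (d : ℕ) (ν : ℝ) (μ : Fin d → ℝ)
    (Sig : Matrix (Fin d) (Fin d) ℝ) (x : Fin d → ℝ) : ℝ :=
  Real.Gamma (((d : ℝ) + ν) / 2) /
      (Real.Gamma (ν / 2) * ν ^ ((d : ℝ) / 2) * Real.pi ^ ((d : ℝ) / 2) *
        Real.sqrt Sig.det) *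
    (1 + (1 / ν) * dotProduct (x - μ) (Sig⁻¹ *ᵥ (x - μ))) ^ (-(((d : ℝ) + ν) / 2))

/-- The reparametrized negative log-likelihood of a Student-t mixture model. -/
noncomputable def mmH (d K n : ℕ) (ε : ℝ) (x : Fin n → Fin d → ℝ)
    (α ν : Fin K → ℝ) (μ : Fin K → Fin d → ℝ)
    (Sig : Fin K → Matrix (Fin d) (Fin d) ℝ) : ℝ :=
  -(1 / n : ℝ) * ∑ i, Real.log (∑ k,
    (Real.exp (α k) / ∑ j, Real.exp (α j)) *
      studentPdf d (ν k ^ 2 + ε) (μ k) ((Sig k)ᵀ * Sig k + ε • 1) (x i))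

section Helpers

variable {E : Type*} [NormedAddCommGroup E] [NormedSpace ℝ E] {f g : E → ℝ} {x : E}

/-- `Real.log` is analytic at positive points. -/
lemma analyticAt_rlog {y : ℝ} (hy : 0 < y) : AnalyticAt ℝ Real.log y := by
  have h1 : AnalyticAt ℂ Complex.log (y : ℂ) :=
    analyticAt_clog (Or.inl (by simpa using hy))
  have h2 : AnalyticAt ℝ (fun t : ℝ => (Complex.log (t : ℂ)).re) y :=
    (Complex.reCLM.analyticAt _).comp
      (h1.restrictScalars.comp (Complex.ofRealCLM.analyticAt _))
  simpa [Complex.log_ofReal_re] using h2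

lemma AnalyticAt.rlog (hf : AnalyticAt ℝ f x) (h : 0 < f x) :
    AnalyticAt ℝ (fun z => Real.log (f z)) x :=
  (analyticAt_rlog h).comp hf

/-- `f ^ g` (real rpow) is analytic when the base is positive. -/
lemma AnalyticAt.rpow' (hf : AnalyticAt ℝ f x) (hg : AnalyticAt ℝ g x) (h : 0 < f x) :
    AnalyticAt ℝ (fun z => f z ^ g z) x := by
  have h1 : AnalyticAt ℝ (fun z => Real.exp (Real.log (f z) * g z)) x :=
    ((hf.rlog h).mul hg).rexp
  apply h1.congr
  have hev : ∀ᶠ z in 𝓝 x, 0 < f z := hf.continuousAt.eventually (eventually_gt_nhds h)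
  filter_upwards [hev] with z hz
  rw [Real.rpow_def_of_pos hz]

/-- `Real.sqrt ∘ f` is analytic when `f` is analytic and positive. -/
lemma AnalyticAt.rsqrt (hf : AnalyticAt ℝ f x) (h : 0 < f x) :
    AnalyticAt ℝ (fun z => Real.sqrt (f z)) x := by
  simp only [Real.sqrt_eq_rpow]
  exact hf.rpow' analyticAt_const h

/-- `Real.Gamma` is analytic at positive points. -/
lemma analyticAt_rGamma {y : ℝ} (hy : 0 < y) : AnalyticAt ℝ Real.Gamma y := by
  have h1 : AnalyticAt ℂ Complex.Gamma (y : ℂ) := by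
    rw [Complex.analyticAt_iff_eventually_differentiableAt]
    have hev : ∀ᶠ z : ℂ in 𝓝 (y : ℂ), 0 < z.re :=
      (isOpen_lt continuous_const Complex.continuous_re).eventually_mem (by simpa using hy)
    filter_upwards [hev] with z hz
    refine Complex.differentiableAt_Gamma z fun m hm => ?_
    rw [hm] at hz
    simp only [Complex.neg_re, Complex.natCast_re] at hz
    have : (0 : ℝ) ≤ m := Nat.cast_nonneg m
    linarith
  have h2 : AnalyticAt ℝ (fun t : ℝ => (Complex.Gamma (t : ℂ)).re) y :=
    (Complex.reCLM.analyticAt _).comp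
      (h1.restrictScalars.comp (Complex.ofRealCLM.analyticAt _))
  simpa [Complex.Gamma_ofReal] using h2

/-- The determinant of an analytic matrix-valued function is analytic. -/
lemma analyticAt_matrix_det {d : ℕ} {M : E → Matrix (Fin d) (Fin d) ℝ}
    (h : ∀ i j, AnalyticAt ℝ (fun e => M e i j) x) :
    AnalyticAt ℝ (fun e => (M e).det) x := by
  simp only [Matrix.det_apply']
  exact Finset.analyticAt_fun_sum _ fun σ _ =>
    analyticAt_const.mul (Finset.analyticAt_fun_prod _ fun i _ => h _ _)

/-- The entries of the inverse of an analytic matrix-valued function are analytic at a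
point where the determinant does not vanish. -/
lemma analyticAt_matrix_inv_apply {d : ℕ} {M : E → Matrix (Fin d) (Fin d) ℝ}
    (h : ∀ i j, AnalyticAt ℝ (fun e => M e i j) x) (hdet : (M x).det ≠ 0) (i j : Fin d) :
    AnalyticAt ℝ (fun e => (M e)⁻¹ i j) x := by
  have hadj : AnalyticAt ℝ (fun e => (M e).adjugate i j) x := by
    simp only [Matrix.adjugate_apply]
    refine analyticAt_matrix_det fun a b => ?_
    rcases eq_or_ne a j with rfl | hab
    · simp only [Matrix.updateRow_self]
      exact analyticAt_const
    · simp only [Matrix.updateRow_apply, if_neg hab]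
      exact h a b
  simp only [Matrix.inv_def, Ring.inverse_eq_inv', Matrix.smul_apply, smul_eq_mul]
  exact ((analyticAt_matrix_det h).inv hdet).mul hadj

end Helpers

/-- the reparametrized Student-t mixture negative log-likelihood is real
analytic at every point of `ℝ^K × ℝ^K × ℝ^{d×K} × Sym(d)^K`. -/
theorem mmH_real_analytic (d K n : ℕ) (hd : 1 ≤ d) (hK : 1 ≤ K) (hn : 1 ≤ n)
    (ε : ℝ) (hε : 0 < ε) (x : Fin n → Fin d → ℝ) :
    AnalyticOnNhd ℝ
      (fun p : (Fin K → ℝ) × (Fin K → ℝ) × (Fin K → Fin d → ℝ) ×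
          (Fin K → Matrix (Fin d) (Fin d) ℝ) =>
        mmH d K n ε x p.1 p.2.1 p.2.2.1 p.2.2.2)
      {p | ∀ k, (p.2.2.2 k).IsSymm} := by
  set P := (Fin K → ℝ) × (Fin K → ℝ) × (Fin K → Fin d → ℝ) ×
      (Fin K → Matrix (Fin d) (Fin d) ℝ)
  intro p _
  -- coordinate projections are analytic
  have hα : ∀ k, AnalyticAt ℝ (fun q : P => q.1 k) p := fun k =>
    analyticAt_pi_iff.mp
      (show AnalyticAt ℝ (fun (q : P) (k : Fin K) => q.1 k) p from
        (ContinuousLinearMap.fst ℝ (Fin K → ℝ)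
          ((Fin K → ℝ) × (Fin K → Fin d → ℝ) × (Fin K → Matrix (Fin d) (Fin d) ℝ))).analyticAt p) k
  have hν : ∀ k, AnalyticAt ℝ (fun q : P => q.2.1 k) p := fun k =>
    analyticAt_pi_iff.mp
      (show AnalyticAt ℝ (fun (q : P) (k : Fin K) => q.2.1 k) p from
        ((ContinuousLinearMap.fst ℝ (Fin K → ℝ)
            ((Fin K → Fin d → ℝ) × (Fin K → Matrix (Fin d) (Fin d) ℝ))).comp
          (ContinuousLinearMap.snd ℝ (Fin K → ℝ)
            ((Fin K → ℝ) × (Fin K → Fin d → ℝ) ×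
              (Fin K → Matrix (Fin d) (Fin d) ℝ)))).analyticAt p) k
  have hμ' : ∀ k, AnalyticAt ℝ (fun q : P => q.2.2.1 k) p := fun k =>
    analyticAt_pi_iff.mp
      (show AnalyticAt ℝ (fun (q : P) (k : Fin K) => q.2.2.1 k) p from
        ((ContinuousLinearMap.fst ℝ (Fin K → Fin d → ℝ)
            (Fin K → Matrix (Fin d) (Fin d) ℝ)).comp
          ((ContinuousLinearMap.snd ℝ (Fin K → ℝ)
              ((Fin K → Fin d → ℝ) × (Fin K → Matrix (Fin d) (Fin d) ℝ))).comp
            (ContinuousLinearMap.snd ℝ (Fin K → ℝ)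
              ((Fin K → ℝ) × (Fin K → Fin d → ℝ) ×
                (Fin K → Matrix (Fin d) (Fin d) ℝ))))).analyticAt p) k
  have hμ : ∀ k a, AnalyticAt ℝ (fun q : P => q.2.2.1 k a) p := fun k a =>
    analyticAt_pi_iff.mp
      (show AnalyticAt ℝ (fun (q : P) (a : Fin d) => q.2.2.1 k a) p from hμ' k) a
  have hS'' : ∀ k, AnalyticAt ℝ (fun q : P => q.2.2.2 k) p := fun k =>
    analyticAt_pi_iff.mp
      (show AnalyticAt ℝ (fun (q : P) (k : Fin K) => q.2.2.2 k) p from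
        ((ContinuousLinearMap.snd ℝ (Fin K → Fin d → ℝ)
            (Fin K → Matrix (Fin d) (Fin d) ℝ)).comp
          ((ContinuousLinearMap.snd ℝ (Fin K → ℝ)
              ((Fin K → Fin d → ℝ) × (Fin K → Matrix (Fin d) (Fin d) ℝ))).comp
            (ContinuousLinearMap.snd ℝ (Fin K → ℝ)
              ((Fin K → ℝ) × (Fin K → Fin d → ℝ) ×
                (Fin K → Matrix (Fin d) (Fin d) ℝ))))).analyticAt p) k
  have hS' : ∀ (k : Fin K) (i : Fin d), AnalyticAt ℝ (fun q : P => q.2.2.2 k i) p :=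
    fun k i => analyticAt_pi_iff.mp
      (show AnalyticAt ℝ (fun (q : P) (i : Fin d) => q.2.2.2 k i) p from hS'' k) i
  have hS : ∀ (k : Fin K) (i j : Fin d), AnalyticAt ℝ (fun q : P => q.2.2.2 k i j) p :=
    fun k i j => analyticAt_pi_iff.mp
      (show AnalyticAt ℝ (fun (q : P) (j : Fin d) => q.2.2.2 k i j) p from hS' k i) j
  -- positive definiteness of the scatter matrices, at every parameter value
  have hPD : ∀ (q : P) (k : Fin K), ((q.2.2.2 k)ᵀ * q.2.2.2 k + ε • 1).PosDef := by
    intro q k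
    have h1 : ((q.2.2.2 k)ᵀ * q.2.2.2 k).PosSemidef := by
      have := Matrix.posSemidef_conjTranspose_mul_self (q.2.2.2 k)
      rwa [Matrix.conjTranspose_eq_transpose_of_trivial] at this
    have h2 : (ε • (1 : Matrix (Fin d) (Fin d) ℝ)).PosDef := by
      have : (ε • (1 : Matrix (Fin d) (Fin d) ℝ)) = Matrix.diagonal (fun _ => ε) := by
        ext i j
        rcases eq_or_ne i j with rfl | hij
        · simp [Matrix.one_apply]
        · simp [Matrix.one_apply, hij]
      rw [this]
      exact Matrix.PosDef.diagonal fun _ => hε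
    exact Matrix.PosDef.posSemidef_add h1 h2
  have hν' : ∀ (q : P) (k : Fin K), 0 < q.2.1 k ^ 2 + ε := fun q k => by positivity
  -- positivity of the Student pdf at every parameter value
  have hpdf_pos : ∀ (q : P) (i : Fin n) (k : Fin K),
      0 < studentPdf d (q.2.1 k ^ 2 + ε) (q.2.2.1 k)
        ((q.2.2.2 k)ᵀ * q.2.2.2 k + ε • 1) (x i) := by
    intro q i k
    have hν'' := hν' q k
    have hPDk := hPD q k
    have hdet : 0 < ((q.2.2.2 k)ᵀ * q.2.2.2 k + ε • 1).det := hPDk.det_pos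
    have hbase : 0 < 1 + (1 / (q.2.1 k ^ 2 + ε)) *
        dotProduct (x i - q.2.2.1 k)
          (((q.2.2.2 k)ᵀ * q.2.2.2 k + ε • 1)⁻¹ *ᵥ (x i - q.2.2.1 k)) := by
      have hinv := hPDk.inv.posSemidef
      have hQ := hinv.dotProduct_mulVec_nonneg (x i - q.2.2.1 k)
      rw [star_trivial] at hQ
      have h1ν : 0 < 1 / (q.2.1 k ^ 2 + ε) := by positivity
      nlinarith [mul_nonneg h1ν.le hQ]
    unfold studentPdf
    have hG1 : 0 < Real.Gamma (((d : ℝ) + (q.2.1 k ^ 2 + ε)) / 2) :=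
      Real.Gamma_pos_of_pos (by positivity)
    have hG2 : 0 < Real.Gamma ((q.2.1 k ^ 2 + ε) / 2) :=
      Real.Gamma_pos_of_pos (by positivity)
    have hpi : 0 < Real.pi ^ ((d : ℝ) / 2) := Real.rpow_pos_of_pos Real.pi_pos _
    have hpow : 0 < (q.2.1 k ^ 2 + ε) ^ ((d : ℝ) / 2) := Real.rpow_pos_of_pos hν'' _
    have hsqrt : 0 < Real.sqrt ((q.2.2.2 k)ᵀ * q.2.2.2 k + ε • 1).det :=
      Real.sqrt_pos.mpr hdet
    exact mul_pos (div_pos hG1 (by positivity)) (Real.rpow_pos_of_pos hbase _)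
  -- positivity of the mixture density
  have : Nonempty (Fin K) := ⟨⟨0, hK⟩⟩
  have hsum_exp : ∀ q : P, 0 < ∑ j, Real.exp (q.1 j) := fun q =>
    Finset.sum_pos (fun j _ => Real.exp_pos _) Finset.univ_nonempty
  have hmix_pos : ∀ (q : P) (i : Fin n), 0 < ∑ k,
      (Real.exp (q.1 k) / ∑ j, Real.exp (q.1 j)) *
        studentPdf d (q.2.1 k ^ 2 + ε) (q.2.2.1 k)
          ((q.2.2.2 k)ᵀ * q.2.2.2 k + ε • 1) (x i) := by
    intro q i
    refine Finset.sum_pos (fun k _ => mul_pos (div_pos (Real.exp_pos _) (hsum_exp q))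
      (hpdf_pos q i k)) Finset.univ_nonempty
  -- analyticity of the entries of the scatter matrices
  have hAent : ∀ (k : Fin K) (i j : Fin d),
      AnalyticAt ℝ (fun q : P => ((q.2.2.2 k)ᵀ * q.2.2.2 k + ε • 1) i j) p := by
    intro k i j
    simp only [Matrix.add_apply, Matrix.mul_apply, Matrix.transpose_apply, Matrix.smul_apply,
      Matrix.one_apply, smul_eq_mul]
    exact (Finset.analyticAt_fun_sum _ fun l _ => (hS k l i).mul (hS k l j)).add analyticAt_const
  have hdet_ne : ∀ k : Fin K, ((p.2.2.2 k)ᵀ * p.2.2.2 k + ε • 1).det ≠ 0 := fun k =>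
    (hPD p k).det_pos.ne'
  -- analyticity of each Student pdf term
  have hpdf_an : ∀ (i : Fin n) (k : Fin K),
      AnalyticAt ℝ (fun q : P => studentPdf d (q.2.1 k ^ 2 + ε) (q.2.2.1 k)
        ((q.2.2.2 k)ᵀ * q.2.2.2 k + ε • 1) (x i)) p := by
    intro i k
    unfold studentPdf
    have hν'a : AnalyticAt ℝ (fun q : P => q.2.1 k ^ 2 + ε) p :=
      ((hν k).pow 2).add analyticAt_const
    have hhalf : AnalyticAt ℝ (fun q : P => ((d : ℝ) + (q.2.1 k ^ 2 + ε)) / 2) p :=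
      (analyticAt_const.add hν'a).div analyticAt_const two_ne_zero
    have hG1 : AnalyticAt ℝ (fun q : P => Real.Gamma (((d : ℝ) + (q.2.1 k ^ 2 + ε)) / 2)) p :=
      AnalyticAt.comp (f := fun q : P => ((d : ℝ) + (q.2.1 k ^ 2 + ε)) / 2)
        (analyticAt_rGamma (by positivity : (0:ℝ) < ((d : ℝ) + (p.2.1 k ^ 2 + ε)) / 2)) hhalf
    have hG2 : AnalyticAt ℝ (fun q : P => Real.Gamma ((q.2.1 k ^ 2 + ε) / 2)) p :=
      AnalyticAt.comp (f := fun q : P => (q.2.1 k ^ 2 + ε) / 2)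
        (analyticAt_rGamma (by positivity : (0:ℝ) < (p.2.1 k ^ 2 + ε) / 2))
        (hν'a.div analyticAt_const two_ne_zero)
    have hdet_an : AnalyticAt ℝ (fun q : P => ((q.2.2.2 k)ᵀ * q.2.2.2 k + ε • 1).det) p :=
      analyticAt_matrix_det (hAent k)
    have hsqrt_an : AnalyticAt ℝ
        (fun q : P => Real.sqrt ((q.2.2.2 k)ᵀ * q.2.2.2 k + ε • 1).det) p :=
      hdet_an.rsqrt (hPD p k).det_pos
    have hnupow : AnalyticAt ℝ (fun q : P => (q.2.1 k ^ 2 + ε) ^ ((d : ℝ) / 2)) p :=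
      hν'a.rpow' analyticAt_const (hν' p k)
    have hden : AnalyticAt ℝ (fun q : P => Real.Gamma ((q.2.1 k ^ 2 + ε) / 2) *
        (q.2.1 k ^ 2 + ε) ^ ((d : ℝ) / 2) * Real.pi ^ ((d : ℝ) / 2) *
        Real.sqrt ((q.2.2.2 k)ᵀ * q.2.2.2 k + ε • 1).det) p :=
      ((hG2.mul hnupow).mul analyticAt_const).mul hsqrt_an
    have hden_ne : Real.Gamma ((p.2.1 k ^ 2 + ε) / 2) *
        (p.2.1 k ^ 2 + ε) ^ ((d : ℝ) / 2) * Real.pi ^ ((d : ℝ) / 2) *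
        Real.sqrt ((p.2.2.2 k)ᵀ * p.2.2.2 k + ε • 1).det ≠ 0 := by
      have h1 : 0 < Real.Gamma ((p.2.1 k ^ 2 + ε) / 2) :=
        Real.Gamma_pos_of_pos (by positivity)
      have h2 : 0 < (p.2.1 k ^ 2 + ε) ^ ((d : ℝ) / 2) := Real.rpow_pos_of_pos (hν' p k) _
      have h3 : 0 < Real.pi ^ ((d : ℝ) / 2) := Real.rpow_pos_of_pos Real.pi_pos _
      have h4 : 0 < Real.sqrt ((p.2.2.2 k)ᵀ * p.2.2.2 k + ε • 1).det :=
        Real.sqrt_pos.mpr (hPD p k).det_pos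
      positivity
    have hinv : ∀ a b : Fin d,
        AnalyticAt ℝ (fun q : P => ((q.2.2.2 k)ᵀ * q.2.2.2 k + ε • 1)⁻¹ a b) p :=
      fun a b => analyticAt_matrix_inv_apply (hAent k) (hdet_ne k) a b
    have hQ : AnalyticAt ℝ (fun q : P => dotProduct (x i - q.2.2.1 k)
        (((q.2.2.2 k)ᵀ * q.2.2.2 k + ε • 1)⁻¹ *ᵥ (x i - q.2.2.1 k))) p := by
      simp only [dotProduct, Matrix.mulVec, Pi.sub_apply]
      exact Finset.analyticAt_fun_sum _ fun a _ =>
        (analyticAt_const.sub (hμ k a)).mul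
          (Finset.analyticAt_fun_sum _ fun b _ =>
            (hinv a b).mul (analyticAt_const.sub (hμ k b)))
    have hbase : AnalyticAt ℝ (fun q : P => 1 + (1 / (q.2.1 k ^ 2 + ε)) *
        dotProduct (x i - q.2.2.1 k)
          (((q.2.2.2 k)ᵀ * q.2.2.2 k + ε • 1)⁻¹ *ᵥ (x i - q.2.2.1 k))) p :=
      analyticAt_const.add ((analyticAt_const.div hν'a (hν' p k).ne').mul hQ)
    have hbase_pos : 0 < 1 + (1 / (p.2.1 k ^ 2 + ε)) *
        dotProduct (x i - p.2.2.1 k)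
          (((p.2.2.2 k)ᵀ * p.2.2.2 k + ε • 1)⁻¹ *ᵥ (x i - p.2.2.1 k)) := by
      have hinvpsd := (hPD p k).inv.posSemidef
      have hQ0 := hinvpsd.dotProduct_mulVec_nonneg (x i - p.2.2.1 k)
      rw [star_trivial] at hQ0
      have h1ν : 0 < 1 / (p.2.1 k ^ 2 + ε) := by positivity
      nlinarith [mul_nonneg h1ν.le hQ0]
    exact (hG1.div hden hden_ne).mul (hbase.rpow' hhalf.neg hbase_pos)
  -- assemble
  unfold mmH
  refine analyticAt_const.mul (Finset.analyticAt_fun_sum _ fun i _ => ?_)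
  refine AnalyticAt.rlog ?_ (hmix_pos p i)
  exact Finset.analyticAt_fun_sum _ fun k _ =>
    ((hα k).rexp.div (Finset.analyticAt_fun_sum _ fun j _ => (hα j).rexp)
      (hsum_exp p).ne').mul (hpdf_an i k)
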